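/- In any idempotent c-semiring ⟨A, +, ×, ⊥, ⊤⟩ with induced order ≤, for every a ∈ A and every nonempty finite list a₁,…,aₙ of elements of A: a ≤ a₁ × ⋯ × aₙ if and only if a ≤ aᵢ for every i ∈ {1,…,n}. Hence the SELL promotion side condition a ≤ glb(a₁,…,aₙ) is equivalent to the SELLS promotion side condition a ≤ a₁ × ⋯ × aₙ. -/

import Mathlib

/-- A c-semiring `⟨A, +, ×, ⊥, ⊤⟩`: `+` is commutative, associative and idempotent
with unit `⊥` and absorbing element `⊤`; `×` is commutative and associative with
unit `⊤` and absorbing element `⊥`; and `×` distributes over `+`. -/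
structure CSemiring (A : Type*) where
  add : A → A → A
  mul : A → A → A
  bot : A
  top : A
  add_comm : ∀ a b, add a b = add b a
  add_assoc : ∀ a b c, add (add a b) c = add a (add b c)
  add_idem : ∀ a, add a a = a
  add_unit : ∀ a, add a bot = a
  add_absorb : ∀ a, add a top = top
  mul_comm : ∀ a b, mul a b = mul b a
  mul_assoc : ∀ a b c, mul (mul a b) c = mul a (mul b c)
  mul_unit : ∀ a, mul a top = a
  mul_absorb : ∀ a, mul a bot = bot
  mul_add : ∀ a b c, mul a (add b c) = add (mul a b) (mul a c)

/-- The order induced by `+`: `a ≤ b` iff `a + b = b`. -/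
def CSemiring.le {A : Type*} (S : CSemiring A) (a b : A) : Prop := S.add a b = b

/-- Product `a₁ × ⋯ × aₙ` of a list of c-semiring elements (`⊤` for the empty list). -/
def CSemiring.prod {A : Type*} (S : CSemiring A) (l : List A) : A :=
  l.foldr S.mul S.top

namespace CSemiring

variable {A : Type*} (S : CSemiring A)

lemma le_trans {a b c : A} (h1 : S.le a b) (h2 : S.le b c) : S.le a c := by
  unfold CSemiring.le at *
  rw [← h2, ← S.add_assoc, h1]

lemma mul_le_left (x y : A) : S.le (S.mul x y) x := by
  unfold CSemiring.le
  have : S.add (S.mul x y) (S.mul x S.top) = S.mul x (S.add y S.top) :=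
    (S.mul_add x y S.top).symm
  rw [S.mul_unit] at this
  rw [this, S.add_absorb, S.mul_unit]

lemma mul_le_right (x y : A) : S.le (S.mul x y) y := by
  rw [S.mul_comm]; exact S.mul_le_left y x

lemma mul_mono_left {a b : A} (c : A) (h : S.le a b) : S.le (S.mul a c) (S.mul b c) := by
  unfold CSemiring.le at *
  rw [S.mul_comm a c, S.mul_comm b c, ← S.mul_add, h]

lemma le_mul (hidem : ∀ a, S.mul a a = a) {a b c : A} (h1 : S.le a b) (h2 : S.le a c) :
    S.le a (S.mul b c) := by
  have h3 : S.le (S.mul a a) (S.mul b a) := S.mul_mono_left a h1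
  have h4 : S.le (S.mul b a) (S.mul b c) := by
    rw [S.mul_comm b a, S.mul_comm b c]; exact S.mul_mono_left b h2
  rw [hidem a] at h3
  exact S.le_trans h3 h4

lemma le_top (a : A) : S.le a S.top := S.add_absorb a

end CSemiring

/-- in an idempotent c-semiring, for a nonempty list `a₁, …, aₙ`,
`a ≤ a₁ × ⋯ × aₙ` iff `a ≤ aᵢ` for every `i`; i.e. the SELL promotion
side condition `a ≤ glb(a₁,…,aₙ)` is equivalent to the SELLS one. -/
theorem csemiring_idem_prod_glb {A : Type*} (S : CSemiring A)
    (hidem : ∀ a, S.mul a a = a) (l : List A) (hl : l ≠ []) (a : A) :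
    S.le a (S.prod l) ↔ ∀ x ∈ l, S.le a x := by
  clear hl
  induction l with
  | nil => simp [CSemiring.prod, CSemiring.le, S.add_absorb]
  | cons x xs ih =>
    constructor
    · intro h y hy
      rcases List.mem_cons.mp hy with rfl | hy
      · exact S.le_trans h (S.mul_le_left _ _)
      · exact (ih.mp (S.le_trans h (S.mul_le_right _ _))) y hy
    · intro h
      exact S.le_mul hidem (h x List.mem_cons_self)
        (ih.mpr fun y hy => h y (List.mem_cons_of_mem _ hy))
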